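/- Let G be a finite group, N a normal subgroup of G, and H a strongly closed p-subgroup of G. Then the image HN/N of H in G/N is strongly closed in G/N, and N_{G/N}(HN/N) = N_G(H)N/N. -/

import Mathlib

open Subgroup

def StronglyClosed {G : Type*} [Group G] (H : Subgroup G) : Prop :=
  ∀ g : G, H.map (MulAut.conj g).toMonoidHom ⊓ Subgroup.normalizer (H : Set G) ≤ H

section Aux

variable {G : Type*} [Group G]

private lemma conj_conj (b a : G) (H : Subgroup G) :
    (H.map (MulAut.conj a).toMonoidHom).map (MulAut.conj b).toMonoidHom
      = H.map (MulAut.conj (b * a)).toMonoidHom := by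
  rw [Subgroup.map_map]
  congr 1
  ext x
  simp [mul_assoc]

private lemma conj_one (H : Subgroup G) : H.map (MulAut.conj (1 : G)).toMonoidHom = H := by
  ext x; simp

private lemma card_conj (c : G) (H : Subgroup G) :
    Nat.card (H.map (MulAut.conj c).toMonoidHom) = Nat.card H :=
  (Nat.card_congr (H.equivMapOfInjective _ (MulAut.conj c).injective).toEquiv).symm

private lemma conj_eq_self [Finite G] {c : G} {H : Subgroup G}
    (h : H.map (MulAut.conj c).toMonoidHom ≤ H) :
    H.map (MulAut.conj c).toMonoidHom = H :=
  Subgroup.eq_of_le_of_card_ge h (card_conj c H).ge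

private lemma mem_normalizer_of_conj_eq {c : G} {H : Subgroup G}
    (h : H.map (MulAut.conj c).toMonoidHom = H) : c ∈ (Subgroup.normalizer (H : Set G)) := by
  rw [Subgroup.mem_normalizer_iff]
  intro x
  constructor
  · intro hx
    rw [← h]
    exact ⟨x, hx, rfl⟩
  · intro hx
    rw [← h] at hx
    obtain ⟨y, hy, hxy⟩ := hx
    have : y = x := by
      have : (MulAut.conj c) y = (MulAut.conj c) x := by simpa [MulAut.conj_apply] using hxy
      exact (MulAut.conj c).injective this
    rwa [← this]

private lemma conj_eq_of_mem_normalizer [Finite G] {c : G} {H : Subgroup G}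
    (h : c ∈ (Subgroup.normalizer (H : Set G))) : H.map (MulAut.conj c).toMonoidHom = H := by
  apply conj_eq_self
  rintro x ⟨y, hy, rfl⟩
  exact (Subgroup.mem_normalizer_iff.mp h y).mp hy

private lemma sc_conj {H : Subgroup G} (hSC : StronglyClosed H) (c : G) :
    StronglyClosed (H.map (MulAut.conj c).toMonoidHom) := by
  intro g
  rw [conj_conj, ← map_equiv_normalizer_eq H (MulAut.conj c)]
  have : H.map (MulAut.conj (g * c)).toMonoidHom
      = (H.map (MulAut.conj (c⁻¹ * g * c)).toMonoidHom).map (MulAut.conj c).toMonoidHom := by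
    rw [conj_conj]
    congr 2
    group
  rw [this, ← Subgroup.map_inf _ _ _ (MulAut.conj c).injective]
  exact Subgroup.map_mono (hSC (c⁻¹ * g * c))

private lemma pgroup_le_normalizer [Finite G] {p : ℕ} [Fact p.Prime] {H : Subgroup G}
    (hSC : StronglyClosed H) {P : Subgroup G} (hP : IsPGroup p P) (hHP : H ≤ P) :
    P ≤ (Subgroup.normalizer (H : Set G)) := by
  have : Group.IsNilpotent ↥P := hP.isNilpotent
  have hnc := (normalizerCondition_iff_only_full_group_self_normalizing).mp
    (@normalizerCondition_of_isNilpotent ↥P _ this)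
  set K : Subgroup ↥P := ((Subgroup.normalizer (H : Set G)) ⊓ P).subgroupOf P with hKdef
  have hKnorm : (Subgroup.normalizer (K : Set ↥P)) ≤ K := by
    intro x hx
    have hconj : H.map (MulAut.conj (x : G)).toMonoidHom ≤ (Subgroup.normalizer (H : Set G)) := by
      rintro _ ⟨h, hh, rfl⟩
      have hhP : h ∈ P := hHP hh
      have hhK : (⟨h, hhP⟩ : ↥P) ∈ K := by
        simp only [hKdef, Subgroup.mem_subgroupOf, Subgroup.mem_inf]
        exact ⟨Subgroup.le_normalizer hh, hhP⟩
      have := (Subgroup.mem_normalizer_iff.mp hx _).mp hhK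
      simp only [hKdef, Subgroup.mem_subgroupOf, Subgroup.mem_inf] at this
      simpa [MulAut.conj_apply] using this.1
    have hle : H.map (MulAut.conj (x : G)).toMonoidHom ≤ H :=
      fun y hy => hSC (x : G) ⟨hy, hconj hy⟩
    have heq := conj_eq_self hle
    have : (x : G) ∈ (Subgroup.normalizer (H : Set G)) := mem_normalizer_of_conj_eq heq
    simp only [hKdef, Subgroup.mem_subgroupOf, Subgroup.mem_inf]
    exact ⟨this, x.2⟩
  have hKtop : K = ⊤ := hnc K (le_antisymm hKnorm Subgroup.le_normalizer)
  intro y hy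
  have : (⟨y, hy⟩ : ↥P) ∈ K := hKtop ▸ Subgroup.mem_top _
  simp only [hKdef, Subgroup.mem_subgroupOf, Subgroup.mem_inf] at this
  exact this.1

private lemma conj_eq_conj [Finite G] {p : ℕ} [Fact p.Prime] {H : Subgroup G}
    (hSC : StronglyClosed H) {P : Subgroup G} (hP : IsPGroup p P) {b c : G}
    (hb : H.map (MulAut.conj b).toMonoidHom ≤ P)
    (hc : H.map (MulAut.conj c).toMonoidHom ≤ P) :
    H.map (MulAut.conj b).toMonoidHom = H.map (MulAut.conj c).toMonoidHom := by
  have hnorm : P ≤ (Subgroup.normalizer ((H.map (MulAut.conj c).toMonoidHom : Subgroup G) : Set G)) :=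
    pgroup_le_normalizer (sc_conj hSC c) hP hc
  have hle : H.map (MulAut.conj b).toMonoidHom ≤ H.map (MulAut.conj c).toMonoidHom := by
    intro y hy
    apply sc_conj hSC c (b * c⁻¹)
    constructor
    · rw [conj_conj]
      have : b * c⁻¹ * c = b := by group
      rwa [this]
    · exact hnorm (hb hy)
  exact Subgroup.eq_of_le_of_card_ge hle (by rw [card_conj, card_conj])

private lemma exists_conj_le [Finite G] {p : ℕ} [Fact p.Prime] {H L : Subgroup G}
    (hpH : IsPGroup p H) (hHL : H ≤ L) {A : Subgroup G} (hA : IsPGroup p A) (hAL : A ≤ L) :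
    ∃ x ∈ L, ∃ P : Subgroup G, IsPGroup p P ∧ A ≤ P ∧
      H.map (MulAut.conj x).toMonoidHom ≤ P := by
  have hA' : IsPGroup p (A.subgroupOf L) := hA.comap_of_injective _ L.subtype_injective
  have hH' : IsPGroup p (H.subgroupOf L) := hpH.comap_of_injective _ L.subtype_injective
  obtain ⟨S, hS⟩ := hA'.exists_le_sylow
  obtain ⟨T, hT⟩ := hH'.exists_le_sylow
  obtain ⟨x, hx⟩ := MulAction.exists_smul_eq ↥L T S
  refine ⟨(x : G), x.2, (S : Subgroup ↥L).map L.subtype, S.2.map _, ?_, ?_⟩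
  · intro a ha
    exact ⟨⟨a, hAL ha⟩, hS (by simpa [Subgroup.mem_subgroupOf] using ha), rfl⟩
  · rintro _ ⟨h, hh, rfl⟩
    have hhT : (⟨h, hHL hh⟩ : ↥L) ∈ T := hT (by simpa [Subgroup.mem_subgroupOf] using hh)
    have hmem : x * ⟨h, hHL hh⟩ * x⁻¹ ∈ (S : Subgroup ↥L) := by
      rw [← hx]
      rw [Sylow.coe_subgroup_smul, Subgroup.pointwise_smul_def]
      exact ⟨_, hhT, rfl⟩
    exact ⟨_, hmem, rfl⟩

private lemma engineA [Finite G] {p : ℕ} [Fact p.Prime] {H L : Subgroup G}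
    (hpH : IsPGroup p H) (hSC : StronglyClosed H) (hHL : H ≤ L) {g : G}
    (hg : H.map (MulAut.conj g).toMonoidHom ≤ L) :
    ∃ x ∈ L, H.map (MulAut.conj g).toMonoidHom = H.map (MulAut.conj x).toMonoidHom := by
  obtain ⟨x, hxL, P, hPp, hAP, hxP⟩ := exists_conj_le hpH hHL (hpH.map _) hg
  exact ⟨x, hxL, conj_eq_conj hSC hPp hAP hxP⟩

private lemma engineB [Finite G] {p : ℕ} [Fact p.Prime] {H J : Subgroup G}
    (hpH : IsPGroup p H) (hSC : StronglyClosed H) (hHJ : H ≤ J) {g a : G}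
    (ha : a ∈ H.map (MulAut.conj g).toMonoidHom) (haN : a ∈ (Subgroup.normalizer (J : Set G))) : a ∈ J := by
  set L := J ⊔ Subgroup.zpowers a with hLdef
  have hHL : H ≤ L := hHJ.trans le_sup_left
  have hzpA : Subgroup.zpowers a ≤ H.map (MulAut.conj g).toMonoidHom :=
    Subgroup.zpowers_le.mpr ha
  have hzp : IsPGroup p (Subgroup.zpowers a) := (hpH.map _).to_le hzpA
  obtain ⟨x, hxL, P, hPp, hAP, hxP⟩ := exists_conj_le hpH hHL hzp le_sup_right
  have hnorm : P ≤ (Subgroup.normalizer ((H.map (MulAut.conj x).toMonoidHom : Subgroup G) : Set G)) :=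
    pgroup_le_normalizer (sc_conj hSC x) hPp hxP
  have haP : a ∈ P := hAP (Subgroup.mem_zpowers a)
  have haH : a ∈ H.map (MulAut.conj x).toMonoidHom := by
    apply sc_conj hSC x (g * x⁻¹)
    constructor
    · rw [conj_conj]
      have : g * x⁻¹ * x = g := by group
      rwa [this]
    · exact hnorm haP
  have hxJ : H.map (MulAut.conj x).toMonoidHom ≤ J.map (MulAut.conj x).toMonoidHom :=
    Subgroup.map_mono hHJ
  have hxnormJ : x ∈ (Subgroup.normalizer (J : Set G)) := by
    have : L ≤ (Subgroup.normalizer (J : Set G)) := sup_le Subgroup.le_normalizer (Subgroup.zpowers_le.mpr haN)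
    exact this hxL
  have : J.map (MulAut.conj x).toMonoidHom = J := conj_eq_of_mem_normalizer hxnormJ
  exact this ▸ hxJ haH

end Aux

theorem stmt10 {G : Type*} [Group G] [Finite G] (p : ℕ) [Fact p.Prime]
    (N H : Subgroup G) [N.Normal] (hp : IsPGroup p H) (hSC : StronglyClosed H) :
    StronglyClosed (H.map (QuotientGroup.mk' N)) ∧
      Subgroup.normalizer ((H.map (QuotientGroup.mk' N) : Subgroup (G ⧸ N)) : Set (G ⧸ N)) =
        (Subgroup.normalizer (H : Set G)).map (QuotientGroup.mk' N) := by
  set π := QuotientGroup.mk' N with hπ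
  have hker : π.ker = N := QuotientGroup.ker_mk' N
  have hcomap : ∀ K : Subgroup G, (K.map π).comap π = K ⊔ N := fun K => by
    rw [Subgroup.comap_map_eq, hker]
  have hmapN : N.map π = ⊥ := by
    rw [eq_bot_iff]
    rintro _ ⟨n, hn, rfl⟩
    simp only [Subgroup.mem_bot]
    rw [← hker] at hn
    exact hn
  have hmapHN : (H ⊔ N).map π = H.map π := by
    rw [Subgroup.map_sup, hmapN, sup_bot_eq]
  -- key: elements of the normalizer of the image pull back to J-normalizing elements
  have hpull : ∀ a : G, π a ∈ (Subgroup.normalizer ((H.map π : Subgroup (G ⧸ N)) : Set (G ⧸ N))) →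
      (H ⊔ N).map (MulAut.conj a).toMonoidHom ≤ H ⊔ N := by
    intro a haq
    rintro _ ⟨k, hk, rfl⟩
    have hk' : π k ∈ H.map π := by rw [← hmapHN]; exact ⟨k, hk, rfl⟩
    have : π a * π k * (π a)⁻¹ ∈ H.map π :=
      (Subgroup.mem_normalizer_iff.mp haq (π k)).mp hk'
    have hmem : π ((MulAut.conj a) k) ∈ H.map π := by
      simpa [MulAut.conj_apply, map_mul, map_inv] using this
    have := hcomap H ▸ (Subgroup.mem_comap.mpr hmem)
    exact this
  constructor
  · -- strong closure of the image
    intro q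
    rintro x ⟨hx1, hx2⟩
    obtain ⟨g, rfl⟩ := QuotientGroup.mk'_surjective N q
    obtain ⟨y, hy, rfl⟩ := hx1
    obtain ⟨h, hh, rfl⟩ := hy
    set a := g * h * g⁻¹ with hadef
    have hxa : (MulAut.conj (π g)).toMonoidHom (π h) = π a := by
      simp [hadef]
    rw [hxa] at hx2 ⊢
    have haH : a ∈ H.map (MulAut.conj g).toMonoidHom := ⟨h, hh, rfl⟩
    have hanorm : a ∈ (Subgroup.normalizer ((H ⊔ N : Subgroup G) : Set G)) :=
      mem_normalizer_of_conj_eq (conj_eq_self (hpull a hx2))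
    have haJ : a ∈ H ⊔ N := engineB hp hSC le_sup_left haH hanorm
    rw [← hmapHN]
    exact ⟨a, haJ, rfl⟩
  · -- normalizer equality
    apply le_antisymm
    · -- ⊆
      intro q hq
      obtain ⟨g, rfl⟩ := QuotientGroup.mk'_surjective N q
      have hconjle : H.map (MulAut.conj g).toMonoidHom ≤ H ⊔ N := by
        rintro _ ⟨h, hh, rfl⟩
        have hk' : π h ∈ H.map π := ⟨h, hh, rfl⟩
        have : π g * π h * (π g)⁻¹ ∈ H.map π :=
          (Subgroup.mem_normalizer_iff.mp hq (π h)).mp hk'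
        have hmem : π ((MulAut.conj g) h) ∈ H.map π := by
          simpa [MulAut.conj_apply, map_mul, map_inv] using this
        exact hcomap H ▸ (Subgroup.mem_comap.mpr hmem)
      obtain ⟨x, hxL, hxeq⟩ := engineA hp hSC le_sup_left hconjle
      have hx1 : H.map (MulAut.conj (x⁻¹ * g)).toMonoidHom = H := by
        rw [← conj_conj]
        rw [hxeq, conj_conj, inv_mul_cancel, conj_one]
      have hx2 : x⁻¹ * g ∈ (Subgroup.normalizer (H : Set G)) := mem_normalizer_of_conj_eq hx1
      have hgx : π g = π x * π (x⁻¹ * g) := by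
        rw [← map_mul]
        congr 1
        group
      rw [hgx]
      apply mul_mem
      · have : π x ∈ (H ⊔ N).map π := ⟨x, hxL, rfl⟩
        rw [hmapHN] at this
        exact Subgroup.map_mono Subgroup.le_normalizer this
      · exact ⟨x⁻¹ * g, hx2, rfl⟩
    · exact Subgroup.le_normalizer_map π
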